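/- Let τ be a real number and let 0 < B < 1. Then ∫_{B²}^{1} ∫_{B/x}^{1/B} (x y)^{1−τ} (1 − e^{−x y}) dy dx + ∫_{1}^{1/B} ∫_{B/x}^{1/(B x)} (x y)^{1−τ} (1 − e^{−x y}) dy dx = 2 log(1/B) ∫_B^{1/B} u^{1−τ}(1 − e^{−u}) du + ∫_B^{1/B} log(1/u) · u^{1−τ}(1 − e^{−u}) du. -/

import Mathlib

open MeasureTheory intervalIntegral

noncomputable def auxf (τ : ℝ) : ℝ → ℝ := fun u => u ^ (1 - τ) * (1 - Real.exp (-u))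

lemma auxf_contOn (τ : ℝ) : ContinuousOn (auxf τ) (Set.Ioi (0:ℝ)) := by
  apply ContinuousOn.mul
  · exact ContinuousOn.rpow_const continuousOn_id (fun x hx => Or.inl (ne_of_gt hx))
  · exact (continuous_const.sub (Real.continuous_exp.comp continuous_neg)).continuousOn

lemma uIcc_pos {a b : ℝ} (ha : 0 < a) (hb : 0 < b) : Set.uIcc a b ⊆ Set.Ioi (0:ℝ) := by
  intro x hx
  exact (lt_min ha hb).trans_le hx.1

lemma auxf_ii (τ : ℝ) {a b : ℝ} (ha : 0 < a) (hb : 0 < b) :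
    IntervalIntegrable (auxf τ) volume a b :=
  ((auxf_contOn τ).mono (uIcc_pos ha hb)).intervalIntegrable

lemma auxf_hasDeriv (τ B : ℝ) (hB : 0 < B) {x : ℝ} (hx : 0 < x) :
    HasDerivAt (fun t => ∫ u in B..t, auxf τ u) (auxf τ x) x := by
  refine intervalIntegral.integral_hasDerivAt_right (auxf_ii τ hB hx) ?_ ?_
  · exact (auxf_contOn τ).stronglyMeasurableAtFilter isOpen_Ioi x hx
  · exact (auxf_contOn τ).continuousAt (Ioi_mem_nhds hx)

theorem stmt_13 (τ B : ℝ) (hB0 : 0 < B) (hB1 : B < 1) :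
    (∫ x in (B ^ 2 : ℝ)..(1 : ℝ), ∫ y in (B / x)..(1 / B),
        (x * y) ^ (1 - τ) * (1 - Real.exp (-(x * y))))
    + (∫ x in (1 : ℝ)..(1 / B), ∫ y in (B / x)..(1 / (B * x)),
        (x * y) ^ (1 - τ) * (1 - Real.exp (-(x * y))))
    = 2 * Real.log (1 / B) * (∫ u in B..(1 / B), u ^ (1 - τ) * (1 - Real.exp (-u)))
      + ∫ u in B..(1 / B), Real.log (1 / u) * (u ^ (1 - τ) * (1 - Real.exp (-u))) := by
  have hBne : B ≠ 0 := ne_of_gt hB0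
  have hBinv : (1:ℝ) < 1 / B := one_lt_one_div hB0 hB1
  have hBinv0 : (0:ℝ) < 1 / B := lt_trans one_pos hBinv
  set F : ℝ → ℝ := fun t => ∫ u in B..t, auxf τ u with hF
  -- Region 1 inner substitution
  have h1 : (∫ x in (B ^ 2 : ℝ)..(1 : ℝ), ∫ y in (B / x)..(1 / B),
        (x * y) ^ (1 - τ) * (1 - Real.exp (-(x * y))))
      = ∫ x in (B ^ 2 : ℝ)..(1 : ℝ), x⁻¹ * F (x / B) := by
    apply intervalIntegral.integral_congr
    intro x hx
    have hx0 : 0 < x := lt_of_lt_of_le (lt_min (pow_pos hB0 2) one_pos) hx.1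
    have := intervalIntegral.integral_comp_mul_left (a := B / x) (b := 1 / B)
      (c := x) (auxf τ) (ne_of_gt hx0)
    simp only [auxf] at this
    rw [show x * (B / x) = B by field_simp, show x * (1 / B) = x / B by ring] at this
    simpa [smul_eq_mul, hF, auxf] using this
  -- Region 2 inner substitution
  have h2 : (∫ x in (1 : ℝ)..(1 / B), ∫ y in (B / x)..(1 / (B * x)),
        (x * y) ^ (1 - τ) * (1 - Real.exp (-(x * y))))
      = ∫ x in (1 : ℝ)..(1 / B), x⁻¹ * F (1 / B) := by
    apply intervalIntegral.integral_congr
    intro x hx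
    have hx0 : 0 < x := lt_of_lt_of_le (lt_min one_pos hBinv0) hx.1
    have := intervalIntegral.integral_comp_mul_left (a := B / x) (b := 1 / (B * x))
      (c := x) (auxf τ) (ne_of_gt hx0)
    simp only [auxf] at this
    rw [show x * (B / x) = B by field_simp, show x * (1 / (B * x)) = 1 / B by field_simp] at this
    simpa [smul_eq_mul, hF, auxf] using this
  -- Region 2 outer evaluation
  have h2' : (∫ x in (1 : ℝ)..(1 / B), x⁻¹ * F (1 / B))
      = Real.log (1 / B) * F (1 / B) := by
    rw [intervalIntegral.integral_mul_const, integral_inv_of_pos one_pos hBinv0]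
    simp
  -- Region 1 outer substitution
  have h3 : (∫ x in (B ^ 2 : ℝ)..(1 : ℝ), x⁻¹ * F (x / B))
      = ∫ u in B..(1 / B), u⁻¹ * F u := by
    have := intervalIntegral.integral_comp_mul_right (a := B) (b := 1 / B)
      (c := B) (fun x => x⁻¹ * F (x / B)) hBne
    rw [show B * B = B ^ 2 by ring, show (1 / B) * B = 1 by field_simp] at this
    have this2 : (∫ x in (B ^ 2 : ℝ)..(1:ℝ), x⁻¹ * F (x / B))
        = B • ∫ x in B..(1 / B), (x * B)⁻¹ * F (x * B / B) := by
      rw [this, smul_smul, mul_inv_cancel₀ hBne, one_smul]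
    rw [this2, smul_eq_mul, ← intervalIntegral.integral_const_mul]
    apply intervalIntegral.integral_congr
    intro x hx
    have hx0 : 0 < x := uIcc_pos hB0 hBinv0 hx
    show B * ((x * B)⁻¹ * F (x * B / B)) = x⁻¹ * F x
    have hxne : x ≠ 0 := ne_of_gt hx0
    rw [mul_div_cancel_right₀ _ hBne]
    field_simp
  -- Integration by parts
  have h4 : (∫ u in B..(1 / B), u⁻¹ * F u)
      = Real.log (1 / B) * F (1 / B) - ∫ u in B..(1 / B), auxf τ u * Real.log u := by
    have hibp := intervalIntegral.integral_mul_deriv_eq_deriv_mul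
      (a := B) (b := 1 / B) (u := F) (u' := auxf τ) (v := Real.log)
      (v' := fun x => x⁻¹)
      (fun x hx => auxf_hasDeriv τ B hB0 (uIcc_pos hB0 hBinv0 hx))
      (fun x hx => Real.hasDerivAt_log (ne_of_gt (uIcc_pos hB0 hBinv0 hx)))
      (auxf_ii τ hB0 hBinv0)
      (intervalIntegrable_inv (fun x hx => ne_of_gt (uIcc_pos hB0 hBinv0 hx))
        continuousOn_id)
    have hFB : F B = 0 := intervalIntegral.integral_same
    rw [intervalIntegral.integral_congr (g := fun x => F x * x⁻¹)
        (fun x hx => mul_comm _ _), hibp, hFB]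
    ring
  have h5 : (∫ u in B..(1 / B), Real.log (1 / u) * (u ^ (1 - τ) * (1 - Real.exp (-u))))
      = -∫ u in B..(1 / B), auxf τ u * Real.log u := by
    rw [← intervalIntegral.integral_neg]
    apply intervalIntegral.integral_congr
    intro u hu
    have hu0 : 0 < u := uIcc_pos hB0 hBinv0 hu
    simp only [auxf, one_div, Real.log_inv]
    ring
  rw [h1, h2, h2', h3, h4, h5]
  have hFeq : F (1 / B) = ∫ u in B..(1 / B), u ^ (1 - τ) * (1 - Real.exp (-u)) := rfl
  rw [hFeq]
  ring
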